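/- Let n ≥ 4 be even, let p = 1 / C(n, n/2) (the reciprocal of the central binomial coefficient), let A = √p − (2^{n/2 − 1} − 1), and let 𝒟 = {2^i : i = 0, 1, …, n−2} ∪ {A}, a set of n real numbers. Let D* = {2^0, 2^1, …, 2^{n/2 − 2}} ∪ {A}. Then |D*| = n/2, Σ_{x ∈ D*} x = √p (so that 1/Σ_{x ∈ D*} x = C(n, n/2)^{1/2}), and for every other size-(n/2) subset D' ⊆ 𝒟 with D' ≠ D*, the sum Σ_{x ∈ D'} x ≥ 1, hence 0 < 1/Σ_{x ∈ D'} x ≤ 1. -/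
import Mathlib

open Finset

private lemma key15 (k : ℕ) (T : Finset ℕ) (hcard : T.card = k) (hne : T ≠ Finset.range k) :
    (2:ℝ)^k ≤ ∑ i ∈ T, (2:ℝ)^i := by
  have hns : ¬ T ⊆ Finset.range k := fun hsub =>
    hne (Finset.eq_of_subset_of_card_le hsub (by simp [hcard]))
  obtain ⟨m, hmT, hm⟩ := Finset.not_subset.mp hns
  have hk : k ≤ m := by simpa using hm
  calc (2:ℝ)^k ≤ 2^m := pow_le_pow_right₀ one_le_two hk
    _ ≤ ∑ i ∈ T, (2:ℝ)^i :=
      Finset.single_le_sum (fun i _ => by positivity) hmT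

theorem statement_15 (n : ℕ) (hn : 4 ≤ n) (hev : Even n) :
    let p : ℝ := 1 / (n.choose (n / 2) : ℝ)
    let A : ℝ := Real.sqrt p - ((2 : ℝ) ^ (n / 2 - 1) - 1)
    let 𝒟 : Finset ℝ := (Finset.range (n - 1)).image (fun i => (2 : ℝ) ^ i) ∪ {A}
    let Dstar : Finset ℝ := (Finset.range (n / 2 - 1)).image (fun i => (2 : ℝ) ^ i) ∪ {A}
    𝒟.card = n ∧
    Dstar.card = n / 2 ∧
    Dstar ⊆ 𝒟 ∧
    (∑ x ∈ Dstar, x) = Real.sqrt p ∧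
    (∑ x ∈ Dstar, x)⁻¹ = Real.sqrt (n.choose (n / 2) : ℝ) ∧
    ∀ D' ∈ 𝒟.powersetCard (n / 2), D' ≠ Dstar →
      1 ≤ (∑ x ∈ D', x) ∧ 0 < (∑ x ∈ D', x)⁻¹ ∧ (∑ x ∈ D', x)⁻¹ ≤ 1 := by
  intro p A 𝒟 Dstar
  have hC : 0 < n.choose (n / 2) := Nat.choose_pos (Nat.div_le_self n 2)
  have hCR : (1:ℝ) ≤ (n.choose (n / 2) : ℝ) := by exact_mod_cast hC
  have hp1 : p ≤ 1 := by
    rw [div_le_one (by linarith)]; exact hCR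
  have hsp1 : Real.sqrt p ≤ 1 := Real.sqrt_le_one.mpr hp1
  have hsp0 : 0 ≤ Real.sqrt p := Real.sqrt_nonneg p
  have hn2 : 2 ≤ n / 2 := by omega
  have h2pow : (2:ℝ) ≤ 2 ^ (n / 2 - 1) := by
    calc (2:ℝ) = 2 ^ 1 := (pow_one 2).symm
      _ ≤ 2 ^ (n / 2 - 1) := pow_le_pow_right₀ one_le_two (by omega)
  have hA0 : A ≤ 0 := by simp only [A]; linarith
  have hinj : Function.Injective (fun i : ℕ => (2:ℝ) ^ i) :=
    fun a b h => Nat.pow_right_injective (le_refl 2)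
      (by simpa using h)
  have hAnotin : ∀ s : Finset ℕ, A ∉ s.image (fun i : ℕ => (2:ℝ) ^ i) := by
    intro s hA
    obtain ⟨i, _, hi⟩ := Finset.mem_image.mp hA
    have : (0:ℝ) < 2 ^ i := by positivity
    rw [hi] at this; linarith
  have hdisj1 : Disjoint ((Finset.range (n - 1)).image (fun i => (2 : ℝ) ^ i)) {A} := by
    simp [Finset.disjoint_singleton_right, hAnotin]
  have hdisj2 : Disjoint ((Finset.range (n / 2 - 1)).image (fun i => (2 : ℝ) ^ i)) {A} := by
    simp [Finset.disjoint_singleton_right, hAnotin]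
  have hcard𝒟 : 𝒟.card = n := by
    rw [Finset.card_union_of_disjoint hdisj1, Finset.card_image_of_injective _ hinj]
    simp; omega
  have hcardD : Dstar.card = n / 2 := by
    rw [Finset.card_union_of_disjoint hdisj2, Finset.card_image_of_injective _ hinj]
    simp; omega
  have hsub : Dstar ⊆ 𝒟 := by
    apply Finset.union_subset_union_left
    apply Finset.image_subset_image
    exact Finset.range_subset_range.mpr (by omega)
  have hgeom : ∑ i ∈ Finset.range (n / 2 - 1), (2:ℝ) ^ i = 2 ^ (n / 2 - 1) - 1 := by
    rw [geom_sum_eq (by norm_num)]; norm_num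
  have hsumD : (∑ x ∈ Dstar, x) = Real.sqrt p := by
    rw [Finset.sum_union hdisj2, Finset.sum_image (fun a _ b _ h => hinj h), hgeom]
    simp [A]
  refine ⟨hcard𝒟, hcardD, hsub, hsumD, ?_, ?_⟩
  · rw [hsumD]
    have : p = ((n.choose (n / 2) : ℝ))⁻¹ := one_div _
    rw [this, Real.sqrt_inv, inv_inv]
  · intro D' hD' hne
    obtain ⟨hDsub, hDcard⟩ := Finset.mem_powersetCard.mp hD'
    have hmain : 1 ≤ ∑ x ∈ D', x := by
      by_cases hA : A ∈ D'
      · -- set of exponents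
        set T := (Finset.range (n - 1)).filter (fun i => (2:ℝ) ^ i ∈ D') with hT
        have himg : D'.erase A = T.image (fun i : ℕ => (2:ℝ) ^ i) := by
          ext x
          simp only [Finset.mem_erase, Finset.mem_image, hT, Finset.mem_filter]
          constructor
          · rintro ⟨hxA, hxD⟩
            have := hDsub hxD
            simp only [𝒟, Finset.mem_union, Finset.mem_image, Finset.mem_singleton] at this
            rcases this with ⟨i, hi, hix⟩ | h
            · exact ⟨i, ⟨hi, hix ▸ hxD⟩, hix⟩
            · exact absurd h hxA
          · rintro ⟨i, ⟨_, hiD⟩, hix⟩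
            refine ⟨?_, hix ▸ hiD⟩
            have : (0:ℝ) < 2 ^ i := by positivity
            rw [← hix]; intro h; rw [h] at this; linarith
        have hTcard : T.card = n / 2 - 1 := by
          have := Finset.card_erase_of_mem hA
          rw [himg, Finset.card_image_of_injective _ hinj] at this
          omega
        have hTne : T ≠ Finset.range (n / 2 - 1) := by
          intro hTeq
          apply hne
          have : D' = insert A (D'.erase A) := (Finset.insert_erase hA).symm
          rw [this, himg, hTeq]
          rw [Finset.insert_eq, Finset.union_comm]
        have hkey := key15 (n / 2 - 1) T hTcard hTne
        have hsum : ∑ x ∈ D', x = (∑ i ∈ T, (2:ℝ) ^ i) + A := by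
          rw [← Finset.sum_erase_add D' _ hA, himg,
            Finset.sum_image (fun a _ b _ h => hinj h)]
        rw [hsum]
        simp only [A]
        linarith
      · -- all elements are powers of two, each ≥ 1
        have hge : ∀ x ∈ D', (1:ℝ) ≤ x := by
          intro x hx
          have := hDsub hx
          simp only [𝒟, Finset.mem_union, Finset.mem_image, Finset.mem_singleton] at this
          rcases this with ⟨i, _, hix⟩ | h
          · rw [← hix]; exact one_le_pow₀ one_le_two
          · exact absurd (h ▸ hx) hA
        have hpos : 0 < D'.card := by omega
        obtain ⟨x, hx⟩ := Finset.card_pos.mp hpos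
        calc (1:ℝ) ≤ x := hge x hx
          _ ≤ ∑ y ∈ D', y := Finset.single_le_sum
            (fun y hy => le_trans zero_le_one (hge y hy)) hx
    have hspos : (0:ℝ) < ∑ x ∈ D', x := lt_of_lt_of_le one_pos hmain
    exact ⟨hmain, inv_pos.mpr hspos, inv_le_one_of_one_le₀ hmain⟩
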